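/- Let k be a commutative ring and n ≥ 2 an integer, and let X be the prime spectrum of kⁿ with its Zariski topology. Let 𝒪_X denote the structure sheaf of Spec(kⁿ), regarded as a sheaf of (not necessarily commutative) rings on X via the forgetful functor from commutative rings to rings. Let F be a sheaf of rings on X and α : 𝒪_X → F a morphism of sheaves of rings. Suppose there is a unital ring homomorphism β : Mₙ(k) → F(X) from the n×n matrix ring over k to the global sections of F such that the composite kⁿ → 𝒪_X(X) → F(X) (the canonical map from kⁿ to global sections of the structure sheaf followed by the global component of α) equals β ∘ d, where d : kⁿ → Mₙ(k) is the diagonal embedding. Then F is the zero sheaf: F(U) is the trivial ring for every open set U ⊆ X. -/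

import Mathlib

universe u

open CategoryTheory Opposite AlgebraicGeometry TopologicalSpace

theorem stmt_8 (k : Type u) [CommRing k] (n : ℕ) (hn : 2 ≤ n)
    (F : TopCat.Sheaf RingCat.{u} (PrimeSpectrum.Top (Fin n → k)))
    (α : (Spec.structureSheaf (Fin n → k)).val ⋙ forget₂ CommRingCat RingCat ⟶ F.val)
    (β : Matrix (Fin n) (Fin n) k →+* F.val.obj (op ⊤))
    (hcomp : ∀ a : Fin n → k,
      α.app (op ⊤) (StructureSheaf.toOpen (Fin n → k) ⊤ a) =
        β (Matrix.diagonalRingHom (Fin n) k a)) :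
    ∀ U : Opens (PrimeSpectrum.Top (Fin n → k)), Subsingleton (F.val.obj (op U)) := by
  set R := Fin n → k
  set e : Fin n → R := fun i => Pi.single i (1 : k) with he
  have hnontriv : Nontrivial (Fin n) := Fin.nontrivial_iff_two_le.mpr hn
  -- key: on any V ≤ basicOpen (e i), F is trivial
  have key : ∀ (i : Fin n) (V : Opens (PrimeSpectrum.Top R)),
      V ≤ PrimeSpectrum.basicOpen (e i) → (1 : F.val.obj (op V)) = 0 := by
    intro i V hV
    obtain ⟨j, hij⟩ : ∃ j : Fin n, j ≠ i := exists_ne i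
    -- restriction to V
    let r : F.val.obj (op ⊤) →+* F.val.obj (op V) := (F.val.map (homOfLE (le_top : V ≤ ⊤)).op).hom
    have hα : ∀ a : R, r (α.app (op ⊤) (StructureSheaf.toOpen R ⊤ a)) =
        α.app (op V) (StructureSheaf.toOpen R V a) := by
      intro a
      exact (congrArg (fun f => f (StructureSheaf.toOpen R ⊤ a))
        (α.naturality (homOfLE (le_top : V ≤ ⊤)).op)).symm
    have hei1 : StructureSheaf.toOpen R V (e i) = 1 := by
      have hunit : IsUnit (StructureSheaf.toOpen R V (e i)) := by
        have h1 : IsUnit (StructureSheaf.toOpen R (PrimeSpectrum.basicOpen (e i)) (e i)) :=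
          IsLocalization.map_units (Functor.obj (ObjectProperty.FullSubcategory.obj
            (structureSheafInType R R)) (op (PrimeSpectrum.basicOpen (e i))))
            (⟨e i, Submonoid.mem_powers _⟩ : Submonoid.powers (e i))
        have h2 : StructureSheaf.toOpen R V (e i) =
            ((Spec.structureSheaf R).val.map (homOfLE hV).op)
              (StructureSheaf.toOpen R (PrimeSpectrum.basicOpen (e i)) (e i)) := rfl
        rw [h2]
        exact h1.map ((Spec.structureSheaf R).val.map (homOfLE hV).op).hom
      have hidem : StructureSheaf.toOpen R V (e i) * StructureSheaf.toOpen R V (e i) =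
          StructureSheaf.toOpen R V (e i) := by
        rw [← map_mul]
        congr 1
        simp only [he]
        rw [← Pi.single_mul, one_mul]
      exact hunit.mul_left_cancel (by rw [mul_one]; exact hidem)
    have hej0 : StructureSheaf.toOpen R V (e j) = 0 := by
      have h0 : StructureSheaf.toOpen R V (e i) * StructureSheaf.toOpen R V (e j) = 0 := by
        rw [← map_mul]
        have hez : e i * e j = 0 := by
          show (Pi.single i 1 : R) * Pi.single j 1 = 0
          funext m
          show (Pi.single i (1:k) : Fin n → k) m * (Pi.single j 1 : Fin n → k) m = 0
          rw [Pi.single_apply, Pi.single_apply]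
          split_ifs with h1 h2
          · exact absurd (h1.symm.trans h2) (Ne.symm hij)
          · rw [mul_zero]
          · rw [zero_mul]
          · rw [zero_mul]
        rw [hez, map_zero]
      rwa [hei1, one_mul] at h0
    -- matrix units
    have hdiag : ∀ m : Fin n, Matrix.diagonalRingHom (Fin n) k (e m) =
        Matrix.single m m 1 := by
      intro m
      simp only [he]
      ext a b
      by_cases ha : a = m <;> by_cases hb : b = m
      · subst ha hb
        simp [Matrix.diagonalRingHom_apply, Matrix.diagonal_apply, Matrix.single]
      · subst ha
        simp [Matrix.diagonalRingHom_apply, Matrix.diagonal_apply, Matrix.single, Ne.symm hb]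
      · subst hb
        simp [Matrix.diagonalRingHom_apply, Matrix.diagonal_apply, Matrix.single, Ne.symm ha,
          Pi.single_apply]
      · simp [Matrix.diagonalRingHom_apply, Matrix.diagonal_apply, Matrix.single, Ne.symm ha,
          Ne.symm hb, ha]
    set x : F.val.obj (op V) := r (β (Matrix.single i j (1 : k))) with hx
    set y : F.val.obj (op V) := r (β (Matrix.single j i (1 : k))) with hy
    have hxy : x * y = 1 := by
      rw [hx, hy, ← map_mul, ← map_mul, Matrix.single_mul_single_same, mul_one,
        ← hdiag i, ← hcomp, hα, hei1, map_one]
    have hyx : y * x = 0 := by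
      rw [hx, hy, ← map_mul, ← map_mul, Matrix.single_mul_single_same, mul_one,
        ← hdiag j, ← hcomp, hα, hej0, map_zero]
    have hy0 : y = 0 := by
      calc y = y * (x * y) := by rw [hxy, mul_one]
        _ = (y * x) * y := by rw [mul_assoc]
        _ = 0 := by rw [hyx, zero_mul]
    rw [← hxy, hy0, mul_zero]
  -- the basic opens cover everything
  have hcovertop : (⨆ i, PrimeSpectrum.basicOpen (e i)) =
      (⊤ : Opens (PrimeSpectrum.Top R)) := by
    refine PrimeSpectrum.iSup_basicOpen_eq_top_iff.mpr ?_
    rw [Ideal.eq_top_iff_one]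
    have hsum : (1 : R) = ∑ i, e i := by
      show (1 : Fin n → k) = ∑ i, (Pi.single i 1 : Fin n → k)
      funext m
      rw [Finset.sum_apply, Pi.one_apply]
      simp [Pi.single_apply]
    rw [hsum]
    exact Ideal.sum_mem _ fun i _ => Ideal.subset_span ⟨i, rfl⟩
  intro U
  refine subsingleton_of_forall_eq 0 fun s => ?_
  refine F.eq_of_locally_eq'
    (U := fun i : ULift.{u} (Fin n) => U ⊓ PrimeSpectrum.basicOpen (e i.down)) U
    (fun i => homOfLE (inf_le_left : U ⊓ PrimeSpectrum.basicOpen (e i.down) ≤ U)) ?_ s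
    (0 : F.val.obj (op U)) ?_
  · intro p hp
    have hp2 := (SetLike.ext_iff.mp hcovertop p).mpr trivial
    obtain ⟨i, hi⟩ := Opens.mem_iSup.mp hp2
    exact Opens.mem_iSup.mpr ⟨ULift.up i, hp, hi⟩
  · intro i
    have h1 : (1 : F.val.obj (op (U ⊓ PrimeSpectrum.basicOpen (e i.down)))) = 0 :=
      key i.down _ inf_le_right
    have : Subsingleton (F.val.obj (op (U ⊓ PrimeSpectrum.basicOpen (e i.down)))) :=
      subsingleton_of_zero_eq_one h1.symm
    exact Subsingleton.elim _ _
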